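/- Let $q>1$ and $u\in L^q(\mathbb{R}^N,\mathbb{R}^d)$. Then $u$ belongs to the Besov space $B^{1/q}_{q,\infty}(\mathbb{R}^N,\mathbb{R}^d)$, i.e. $\sup_{\rho>0}\sup_{|h|\le\rho}\int_{\mathbb{R}^N}\rho^{-1}|u(x+h)-u(x)|^q\,dx<\infty$, if and only if $$\limsup_{\varepsilon\to 0^+}\ \sup_{\vec k\in S^{N-1}}\int_{\mathbb{R}^N}\frac{1}{\varepsilon}\,\big|u(x+\varepsilon\vec k)-u(x)\big|^q\,dx<\infty.$$ -/

import Mathlib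

open MeasureTheory Metric Set Filter Topology
open scoped ENNReal

noncomputable section

theorem stmt4 (N d : ℕ) (q : ℝ) (hq : 1 < q)
    (u : EuclideanSpace ℝ (Fin N) → EuclideanSpace ℝ (Fin d))
    (hu : MemLp u (ENNReal.ofReal q) volume) :
    (⨆ (ρ : ℝ) (_ : 0 < ρ) (h : EuclideanSpace ℝ (Fin N)) (_ : ‖h‖ ≤ ρ),
        (∫⁻ x, ENNReal.ofReal (‖u (x + h) - u x‖ ^ q)) / ENNReal.ofReal ρ) < ⊤ ↔
      Filter.limsup (fun ε : ℝ =>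
        ⨆ (k : EuclideanSpace ℝ (Fin N)) (_ : ‖k‖ = 1),
          (∫⁻ x, ENNReal.ofReal (‖u (x + ε • k) - u x‖ ^ q)) /
            ENNReal.ofReal ε) (𝓝[>] (0 : ℝ)) < ⊤ := by
  have hq0 : (0 : ℝ) < q := lt_trans one_pos hq
  set F : EuclideanSpace ℝ (Fin N) → ℝ≥0∞ :=
    fun h => ∫⁻ x, ENNReal.ofReal (‖u (x + h) - u x‖ ^ q) with hFdef
  have hFeq : ∀ h : EuclideanSpace ℝ (Fin N),
      (∫⁻ x, ENNReal.ofReal (‖u (x + h) - u x‖ ^ q)) = F h := fun h => by rw [hFdef]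
  simp only [hFeq]
  -- rewrite the integrand using enorms
  have hof : ∀ y : EuclideanSpace ℝ (Fin d),
      ENNReal.ofReal (‖y‖ ^ q) = (‖y‖₊ : ℝ≥0∞) ^ q := by
    intro y
    rw [← ENNReal.ofReal_rpow_of_nonneg (norm_nonneg y) hq0.le, ofReal_norm, enorm_eq_nnnorm]
  -- the integral I = ∫ ‖u‖^q is finite
  set I : ℝ≥0∞ := ∫⁻ x, (‖u x‖₊ : ℝ≥0∞) ^ q with hIdef
  have hImeas : AEMeasurable (fun x => (‖u x‖₊ : ℝ≥0∞) ^ q) volume :=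
    hu.1.enorm.pow aemeasurable_const
  have hI : I < ⊤ := by
    have h1 := hu.2
    rw [eLpNorm_eq_lintegral_rpow_enorm_toReal (ENNReal.ofReal_pos.2 hq0).ne'
      ENNReal.ofReal_ne_top] at h1
    rw [ENNReal.toReal_ofReal hq0.le] at h1
    simp only [enorm_eq_nnnorm] at h1
    by_contra hcon
    push_neg at hcon
    rw [top_le_iff] at hcon
    rw [hIdef] at hcon
    rw [hcon, ENNReal.top_rpow_of_pos (by positivity)] at h1
    exact absurd h1 (lt_irrefl _)
  -- uniform bound on F
  set M : ℝ≥0∞ := (2 : ℝ≥0∞) ^ (q - 1) * (I + I) with hMdef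
  have hM : M < ⊤ := by
    rw [hMdef]
    exact ENNReal.mul_lt_top
      (ENNReal.rpow_lt_top_of_nonneg (by linarith) ENNReal.ofNat_ne_top)
      (ENNReal.add_lt_top.2 ⟨hI, hI⟩)
  have hFM : ∀ h, F h ≤ M := by
    intro h
    have hmp : MeasurePreserving (fun x : EuclideanSpace ℝ (Fin N) => x + h)
        volume volume := measurePreserving_add_right volume h
    have htrans : (∫⁻ x, (‖u (x + h)‖₊ : ℝ≥0∞) ^ q) = I :=
      lintegral_add_right_eq_self (fun x => (‖u x‖₊ : ℝ≥0∞) ^ q) h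
    have haem : AEMeasurable (fun x => (‖u (x + h)‖₊ : ℝ≥0∞) ^ q) volume :=
      hImeas.comp_quasiMeasurePreserving hmp.quasiMeasurePreserving
    calc F h ≤ ∫⁻ x, (2 : ℝ≥0∞) ^ (q - 1) *
          ((‖u (x + h)‖₊ : ℝ≥0∞) ^ q + (‖u x‖₊ : ℝ≥0∞) ^ q) := by
          refine lintegral_mono fun x => ?_
          rw [hof]
          calc (‖u (x + h) - u x‖₊ : ℝ≥0∞) ^ q
              ≤ ((‖u (x + h)‖₊ : ℝ≥0∞) + (‖u x‖₊ : ℝ≥0∞)) ^ q := by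
                refine ENNReal.rpow_le_rpow ?_ hq0.le
                rw [← ENNReal.coe_add]
                exact_mod_cast nnnorm_sub_le _ _
            _ ≤ (2 : ℝ≥0∞) ^ (q - 1) *
                ((‖u (x + h)‖₊ : ℝ≥0∞) ^ q + (‖u x‖₊ : ℝ≥0∞) ^ q) :=
                ENNReal.rpow_add_le_mul_rpow_add_rpow _ _ hq.le
      _ = (2 : ℝ≥0∞) ^ (q - 1) *
            (∫⁻ x, ((‖u (x + h)‖₊ : ℝ≥0∞) ^ q + (‖u x‖₊ : ℝ≥0∞) ^ q)) := by
          rw [lintegral_const_mul' _ _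
            (ENNReal.rpow_lt_top_of_nonneg (by linarith) ENNReal.ofNat_ne_top).ne]
      _ = M := by
          rw [hMdef, lintegral_add_left' haem, htrans]
  -- the easy direction: the sup over ε, k is bounded by the big sup
  constructor
  · intro hS
    set S := ⨆ (ρ : ℝ) (_ : 0 < ρ) (h : EuclideanSpace ℝ (Fin N)) (_ : ‖h‖ ≤ ρ),
        F h / ENNReal.ofReal ρ with hSdef
    have hev : ∀ᶠ ε in 𝓝[>] (0 : ℝ),
        (⨆ (k : EuclideanSpace ℝ (Fin N)) (_ : ‖k‖ = 1),
          F (ε • k) / ENNReal.ofReal ε) ≤ S := by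
      filter_upwards [self_mem_nhdsWithin] with ε (hε : 0 < ε)
      refine iSup₂_le fun k hk => ?_
      have hnorm : ‖ε • k‖ ≤ ε := by
        rw [norm_smul, hk, mul_one, Real.norm_eq_abs, abs_of_pos hε]
      calc F (ε • k) / ENNReal.ofReal ε
          ≤ ⨆ (h : EuclideanSpace ℝ (Fin N)) (_ : ‖h‖ ≤ ε),
              F h / ENNReal.ofReal ε := le_iSup₂ (f := fun h _ =>
                F h / ENNReal.ofReal ε) (ε • k) hnorm
        _ ≤ S := le_iSup₂ (f := fun ρ (_ : 0 < ρ) =>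
              ⨆ (h : EuclideanSpace ℝ (Fin N)) (_ : ‖h‖ ≤ ρ),
                F h / ENNReal.ofReal ρ) ε hε
    exact lt_of_le_of_lt (limsup_le_of_le (by isBoundedDefault) hev) hS
  · intro hL
    set L := Filter.limsup (fun ε : ℝ =>
        ⨆ (k : EuclideanSpace ℝ (Fin N)) (_ : ‖k‖ = 1),
          F (ε • k) / ENNReal.ofReal ε) (𝓝[>] (0 : ℝ)) with hLdef
    have hLlt : L < L + 1 := ENNReal.lt_add_right hL.ne one_ne_zero
    have hev := Filter.eventually_lt_of_limsup_lt hLlt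
    rw [(nhdsGT_basis (0 : ℝ)).eventually_iff] at hev
    obtain ⟨ε₀, hε₀, hbound⟩ := hev
    -- the claimed bound
    have key : ∀ (ρ : ℝ), 0 < ρ → ∀ (h : EuclideanSpace ℝ (Fin N)), ‖h‖ ≤ ρ →
        F h / ENNReal.ofReal ρ ≤ (L + 1) ⊔ (M / ENNReal.ofReal ε₀) := by
      intro ρ hρ h hhρ
      rcases lt_or_ge ‖h‖ ε₀ with hlt | hge
      · rcases eq_or_lt_of_le (norm_nonneg h) with h0 | h0
        · -- h = 0
          have : h = 0 := norm_eq_zero.1 h0.symm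
          subst this
          have : F (0 : EuclideanSpace ℝ (Fin N)) = 0 := by
            rw [hFdef]
            simp [Real.zero_rpow hq0.ne']
          rw [this, ENNReal.zero_div]
          exact zero_le
        · -- 0 < ‖h‖ < ε₀ : use the limsup bound with ε = ‖h‖, k = h / ‖h‖
          set k : EuclideanSpace ℝ (Fin N) := ‖h‖⁻¹ • h with hkdef
          have hk1 : ‖k‖ = 1 := by
            rw [hkdef, norm_smul, Real.norm_eq_abs, abs_of_pos (inv_pos.2 h0),
              inv_mul_cancel₀ h0.ne']
          have hkh : ‖h‖ • k = h := by
            rw [hkdef, smul_smul, mul_inv_cancel₀ h0.ne', one_smul]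
          have hmem : ‖h‖ ∈ Ioo (0 : ℝ) ε₀ := ⟨h0, hlt⟩
          have h1 : F h / ENNReal.ofReal ‖h‖ ≤ L + 1 := by
            have := (hbound hmem).le
            refine le_trans ?_ this
            have := le_iSup₂ (f := fun (k : EuclideanSpace ℝ (Fin N)) (_ : ‖k‖ = 1) =>
              F (‖h‖ • k) / ENNReal.ofReal ‖h‖) k hk1
            rwa [hkh] at this
          calc F h / ENNReal.ofReal ρ
              ≤ F h / ENNReal.ofReal ‖h‖ :=
                ENNReal.div_le_div le_rfl (ENNReal.ofReal_le_ofReal hhρ)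
            _ ≤ L + 1 := h1
            _ ≤ _ := le_sup_left
      · -- ‖h‖ ≥ ε₀, so ρ ≥ ε₀
        have hρε : ε₀ ≤ ρ := le_trans hge hhρ
        calc F h / ENNReal.ofReal ρ
            ≤ M / ENNReal.ofReal ε₀ :=
              ENNReal.div_le_div (hFM h) (ENNReal.ofReal_le_ofReal hρε)
          _ ≤ _ := le_sup_right
    refine lt_of_le_of_lt (iSup₂_le fun ρ hρ => iSup₂_le fun h hh => key ρ hρ h hh) ?_
    refine sup_lt_iff.2 ⟨?_, ?_⟩
    · exact ENNReal.add_lt_top.2 ⟨hL, ENNReal.one_lt_top⟩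
    · exact ENNReal.div_lt_top hM.ne (ENNReal.ofReal_pos.2 hε₀).ne'
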